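/- Let κ be an uncountable cardinal with κ^{<κ} = κ and let ℱ be a normal filter on κ (i.e., κ-complete and closed under diagonal intersections, containing all final segments). Then Gal(ℱ, κ, κ⁺) holds: any family ⟨A_α ∣ α < κ⁺⟩ ⊆ ℱ has a subfamily of size κ whose intersection belongs to ℱ. -/

import Mathlib

open Cardinal

/-- Galvin's property for a (set-represented) filter on sets of ordinals. -/
def GalSet (W : Set (Set Ordinal.{0})) (κ lam : Cardinal.{0}) : Prop :=
  ∀ (ι : Type) (A : ι → Set Ordinal.{0}), #ι = lam → (∀ i, A i ∈ W) →
    ∃ I : Set ι, #(↥I) = κ ∧ (⋂ i ∈ I, A i) ∈ W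

/-- `F` is a normal (κ-complete, diagonal-intersection closed, containing all
final segments) proper filter on the ordinals below `κ`. -/
def IsNormalFilterOn (κ : Cardinal.{0}) (F : Set (Set Ordinal.{0})) : Prop :=
  (∀ X ∈ F, X ⊆ Set.Iio κ.ord) ∧
  Set.Iio κ.ord ∈ F ∧
  ∅ ∉ F ∧
  (∀ X ∈ F, ∀ Y : Set Ordinal.{0}, X ⊆ Y → Y ⊆ Set.Iio κ.ord → Y ∈ F) ∧
  (∀ S : Set (Set Ordinal.{0}), S ⊆ F → #(↥S) < Cardinal.lift.{1} κ → S.Nonempty → ⋂₀ S ∈ F) ∧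
  (∀ α < κ.ord, {β | α < β ∧ β < κ.ord} ∈ F) ∧
  (∀ A : Ordinal.{0} → Set Ordinal.{0}, (∀ α < κ.ord, A α ∈ F) →
    {β | β < κ.ord ∧ ∀ α < β, β ∈ A α} ∈ F)

/-- If a map has small range and small fibers, its domain is small. -/
lemma galvin_mk_le_of_fibers {α γ : Type} (f : α → γ) {c : Cardinal.{0}}
    (hc : ℵ₀ ≤ c) (hr : #(Set.range f) ≤ c)
    (hf : ∀ a : α, #{a' : α | f a' = f a} ≤ c) : #α ≤ c := by
  classical
  have e : #α = Cardinal.sum fun y : Set.range f => #{a : α // Set.rangeFactorization f a = y} := by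
    rw [← Cardinal.mk_sigma]
    exact (Cardinal.mk_congr (Equiv.sigmaFiberEquiv (Set.rangeFactorization f))).symm
  have hb : ∀ y : Set.range f, #{a : α // Set.rangeFactorization f a = y} ≤ c := by
    rintro ⟨y, a₀, rfl⟩
    refine le_trans (Cardinal.mk_le_of_injective (f := fun z : {a : α //
      Set.rangeFactorization f a = ⟨f a₀, a₀, rfl⟩} => (⟨z.1, by
        have := congrArg Subtype.val z.2
        simpa [Set.rangeFactorization] using this⟩ : {a' : α | f a' = f a₀})) ?_) (hf a₀)
    intro z₁ z₂ h
    have h' : (z₁ : α) = (z₂ : α) := congrArg (fun w : {a' : α | f a' = f a₀} => (w : α)) h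
    exact Subtype.ext h'
  calc #α ≤ Cardinal.sum fun _ : Set.range f => c := by
        rw [e]; exact Cardinal.sum_le_sum _ _ hb
    _ = #(Set.range f) * c := Cardinal.sum_const' _ _
    _ ≤ c * c := mul_le_mul_left hr c
    _ = c := Cardinal.mul_eq_self hc

/-- A set of values indexed by ordinals below `β` has size at most `β.card`. -/
lemma galvin_mk_setOf_le {ι : Type} (β : Ordinal.{0}) (g : (γ : Ordinal.{0}) → γ < β → ι) :
    #{j : ι | ∃ γ, ∃ h : γ < β, g γ h = j} ≤ β.card := by
  have hsub : {j : ι | ∃ γ, ∃ h : γ < β, g γ h = j} ⊆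
      Set.range (fun z : Set.Iio β => g z.1 z.2) := by
    rintro j ⟨γ, hγ, rfl⟩; exact ⟨⟨γ, hγ⟩, rfl⟩
  have h1 := Cardinal.mk_le_mk_of_subset hsub
  have h2 : Cardinal.lift.{1} #(Set.range (fun z : Set.Iio β => g z.1 z.2)) ≤
      Cardinal.lift.{1} β.card := by
    refine le_trans Cardinal.mk_range_le_lift ?_
    rw [Cardinal.lift_uzero, Ordinal.mk_Iio_ordinal]
  exact h1.trans (Cardinal.lift_le.mp h2)

/-- Choice of distinct representatives along the ordinals below `o`. -/
lemma galvin_sdr {ι : Type} [Nonempty ι] (o : Ordinal.{0}) (C : Ordinal.{0} → Set ι)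
    (h : ∀ β < o, ∀ s : Set ι, #s ≤ β.card → (C β \ s).Nonempty) :
    ∃ f : Ordinal.{0} → ι, (∀ β < o, f β ∈ C β) ∧ Set.InjOn f (Set.Iio o) := by
  classical
  set f : Ordinal.{0} → ι := Ordinal.lt_wf.fix (fun β ih =>
    if hβ : β < o then
      (h β hβ {j | ∃ γ, ∃ hγ : γ < β, ih γ hγ = j} (galvin_mk_setOf_le β ih)).some
    else Classical.arbitrary ι) with hf
  have hfix : ∀ β, f β = if hβ : β < o then
      (h β hβ {j | ∃ γ, ∃ hγ : γ < β, f γ = j}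
        (galvin_mk_setOf_le β (fun γ _ => f γ))).some
    else Classical.arbitrary ι := by
    intro β
    rw [hf]
    rw [WellFounded.fix_eq]
  have hmem : ∀ β, β < o → f β ∈ C β \ {j | ∃ γ, ∃ hγ : γ < β, f γ = j} := by
    intro β hβ
    have h' := hfix β
    rw [dif_pos hβ] at h'
    rw [h']
    exact Set.Nonempty.some_mem _
  refine ⟨f, fun β hβ => (hmem β hβ).1, ?_⟩
  intro a ha b hb hab
  by_contra hne
  rcases lt_or_gt_of_ne hne with hlt | hlt
  · exact (hmem b hb).2 ⟨a, hlt, hab⟩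
  · exact (hmem a ha).2 ⟨b, hlt, hab.symm⟩

/-- Galvin's theorem: if `κ^{<κ} = κ` and `F` is a normal filter on `κ`,
then `Gal(F, κ, κ⁺)` holds. -/
theorem stmt6 (κ : Cardinal.{0}) (hunc : ℵ₀ < κ) (hpow : κ ^< κ = κ)
    (F : Set (Set Ordinal.{0})) (hF : IsNormalFilterOn κ F) :
    GalSet F κ (Order.succ κ) := by
  classical
  obtain ⟨hsub, hIio, hemp, hmono, hsInter, hfinal, hdiag⟩ := hF
  intro ι A hι hA
  have hκ0 : ℵ₀ ≤ κ := hunc.le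
  have hord : Order.IsSuccLimit κ.ord := Cardinal.isSuccLimit_ord hκ0
  have hsucc_pos : (0 : Cardinal.{0}) < Order.succ κ :=
    lt_of_le_of_lt (Cardinal.zero_le κ) (Order.lt_succ κ)
  haveI hιne : Nonempty ι := by
    rw [← Cardinal.mk_ne_zero_iff, hι]; exact hsucc_pos.ne'
  set τ := κ.ord.ToType with hτ
  have hτcard : #τ = κ := by rw [hτ]; exact Cardinal.mk_ord_toType κ
  haveI hτne : Nonempty τ := by
    rw [← Cardinal.mk_ne_zero_iff, hτcard]
    exact (Cardinal.aleph0_pos.trans hunc).ne'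
  set e := Ordinal.ToType.mk (o := κ.ord) with he
  set ox : τ → Ordinal.{0} := fun x => ((e.symm x : Set.Iio κ.ord) : Ordinal) with hox
  have hox_lt : ∀ x, ox x < κ.ord := fun x => (e.symm x).2
  have hox_e : ∀ (β : Ordinal.{0}) (hβ : β < κ.ord), ox (e ⟨β, hβ⟩) = β := by
    intro β hβ; simp [hox]
  have hox_inj : Function.Injective ox := by
    intro a b hab
    exact e.symm.injective (Subtype.ext hab)
  set tr : ι → Ordinal.{0} → Set τ := fun i β => {x | ox x < β ∧ ox x ∈ A i} with htr
  set cls : Ordinal.{0} → ι → Set ι := fun β i => {j | tr j β = tr i β} with hcls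
  -- initial segments of τ are small
  have hS : ∀ β < κ.ord, #{x : τ | ox x < β} ≤ β.card := by
    intro β hβ
    have hemb : {x : τ // ox x < β} ↪ (Set.Iio β) :=
      ⟨fun x => ⟨ox x.1, x.2⟩, by
        intro a b hab
        have h' : ox a.1 = ox b.1 := congrArg (fun w : Set.Iio β => (w : Ordinal)) hab
        exact Subtype.ext (hox_inj h')⟩
    have := Cardinal.lift_mk_le'.mpr ⟨hemb⟩
    rw [Cardinal.lift_uzero, Ordinal.mk_Iio_ordinal] at this
    exact Cardinal.lift_le.mp this
  -- each "bad at β" set is small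
  have hBβ : ∀ β < κ.ord, #{i : ι | #(cls β i) ≤ κ} ≤ κ := by
    intro β hβ
    set Bβ := {i : ι | #(cls β i) ≤ κ} with hBb
    refine galvin_mk_le_of_fibers (fun i : Bβ => tr i.1 β) hκ0 ?_ ?_
    · have hsub2 : Set.range (fun i : Bβ => tr i.1 β) ⊆ 𝒫 {x : τ | ox x < β} := by
        rintro y ⟨i, rfl⟩
        intro x hx
        exact hx.1
      calc #(Set.range (fun i : Bβ => tr i.1 β)) ≤ #(𝒫 {x : τ | ox x < β}) :=
            Cardinal.mk_le_mk_of_subset hsub2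
        _ = 2 ^ #{x : τ | ox x < β} := Cardinal.mk_powerset _
        _ ≤ 2 ^ β.card := by
            refine Cardinal.power_le_power_left (by norm_num) (hS β hβ)
        _ ≤ κ ^ β.card := Cardinal.power_le_power_right
            (le_trans (le_of_lt (by exact_mod_cast Cardinal.nat_lt_aleph0 2)) hκ0)
        _ ≤ κ ^< κ := Cardinal.le_powerlt κ (Cardinal.lt_ord.mp hβ)
        _ = κ := hpow
    · rintro a
      refine le_trans (Cardinal.mk_le_of_injective (f := fun z : {a' : Bβ |
          (fun i : Bβ => tr i.1 β) a' = (fun i : Bβ => tr i.1 β) a} =>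
          (⟨z.1.1, z.2⟩ : cls β a.1)) ?_) a.2
      intro z₁ z₂ hz
      have h' : (z₁.1 : ι) = (z₂.1 : ι) :=
        congrArg (fun w : cls β a.1 => (w : ι)) hz
      exact Subtype.ext (Subtype.ext h')
  -- the bad set is small, so there is a good index
  have hgood : ∃ i₀ : ι, ∀ β < κ.ord, κ < #(cls β i₀) := by
    by_contra hcon
    push_neg at hcon
    have hU : {i : ι | ∃ β < κ.ord, #(cls β i) ≤ κ} = Set.univ :=
      Set.eq_univ_of_forall hcon
    have hB : #{i : ι | ∃ β < κ.ord, #(cls β i) ≤ κ} ≤ κ := by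
      have hsubU : {i : ι | ∃ β < κ.ord, #(cls β i) ≤ κ} ⊆
          ⋃ x : τ, {i : ι | #(cls (ox x) i) ≤ κ} := by
        rintro i ⟨β, hβ, hle⟩
        refine Set.mem_iUnion.mpr ⟨e ⟨β, hβ⟩, ?_⟩
        show #(cls (ox (e ⟨β, hβ⟩)) i) ≤ κ
        rw [hox_e β hβ]; exact hle
      refine le_trans (Cardinal.mk_le_mk_of_subset hsubU) ?_
      refine le_trans (Cardinal.mk_iUnion_le _) ?_
      have h1 : ⨆ x : τ, #{i : ι | #(cls (ox x) i) ≤ κ} ≤ κ :=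
        ciSup_le' fun x => hBβ (ox x) (hox_lt x)
      calc #τ * ⨆ x : τ, #{i : ι | #(cls (ox x) i) ≤ κ} ≤ κ * κ :=
            mul_le_mul' (le_of_eq hτcard) h1
        _ = κ := Cardinal.mul_eq_self hκ0
    rw [hU, Cardinal.mk_univ, hι] at hB
    exact absurd hB (not_le.mpr (Order.lt_succ κ))
  obtain ⟨i₀, hi₀⟩ := hgood
  -- choose distinct representatives
  set C : Ordinal.{0} → Set ι := fun β => cls (Order.succ β) i₀ with hC
  have hCbig : ∀ β < κ.ord, ∀ s : Set ι, #s ≤ β.card → (C β \ s).Nonempty := by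
    intro β hβ s hs
    have h1 : κ < #(C β) := hi₀ (Order.succ β) (hord.succ_lt hβ)
    have h2 : #s < #(C β) :=
      lt_of_le_of_lt (hs.trans (le_of_lt (Cardinal.lt_ord.mp hβ))) h1
    by_contra hne
    rw [Set.not_nonempty_iff_eq_empty, Set.diff_eq_empty] at hne
    exact absurd (Cardinal.mk_le_mk_of_subset hne) (not_le.mpr h2)
  obtain ⟨f, hfmem, hfinj⟩ := galvin_sdr κ.ord C hCbig
  refine ⟨f '' Set.Iio κ.ord, ?_, ?_⟩
  · -- cardinality
    have h1 := Cardinal.mk_image_eq_of_injOn_lift f (Set.Iio κ.ord) hfinj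
    rw [Cardinal.lift_uzero, Ordinal.mk_Iio_ordinal, Cardinal.card_ord] at h1
    exact Cardinal.lift_injective h1
  · -- the intersection is in the filter
    set D := {γ : Ordinal.{0} | γ < κ.ord ∧ ∀ δ < γ, γ ∈ A (f δ)} with hD
    have hDF : D ∈ F := hdiag (fun δ => A (f δ)) (fun δ _ => hA (f δ))
    have hEF : A i₀ ∩ D ∈ F := by
      have hpair : ({A i₀, D} : Set (Set Ordinal.{0})) ⊆ F := by
        rintro X (rfl | rfl)
        · exact hA i₀
        · exact hDF
      have hsmall : #(↥({A i₀, D} : Set (Set Ordinal.{0}))) < Cardinal.lift.{1} κ := by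
        have h1 : #(↥({A i₀, D} : Set (Set Ordinal.{0}))) ≤ 2 := by
          refine le_trans Cardinal.mk_insert_le ?_
          rw [Cardinal.mk_singleton]
          norm_num
        have h2 : (2 : Cardinal.{1}) < Cardinal.lift.{1} κ := by
          refine lt_of_lt_of_le ?_ (Cardinal.aleph0_le_lift.mpr hκ0)
          exact_mod_cast Cardinal.nat_lt_aleph0 2
        exact lt_of_le_of_lt h1 h2
      have := hsInter {A i₀, D} hpair hsmall ⟨A i₀, Set.mem_insert _ _⟩
      rwa [Set.sInter_pair] at this
    have hEsub : A i₀ ∩ D ⊆ ⋂ i ∈ f '' Set.Iio κ.ord, A i := by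
      rintro γ ⟨hγA, hγκ, hγD⟩
      refine Set.mem_iInter₂.mpr ?_
      rintro i ⟨β, hβ, rfl⟩
      rcases lt_or_ge β γ with hlt | hle
      · exact hγD β hlt
      · have hmemC : tr (f β) (Order.succ β) = tr i₀ (Order.succ β) := hfmem β hβ
        have hx : (e ⟨γ, hγκ⟩) ∈ tr i₀ (Order.succ β) := by
          constructor
          · rw [hox_e]; exact Order.lt_succ_iff.mpr hle
          · rw [hox_e]; exact hγA
        rw [← hmemC] at hx
        have := hx.2
        rwa [hox_e] at this
    refine hmono _ hEF _ hEsub ?_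
    intro γ hγ
    have hf0 : f 0 ∈ f '' Set.Iio κ.ord := ⟨0, hord.pos, rfl⟩
    exact hsub (A (f 0)) (hA (f 0)) (Set.mem_iInter₂.mp hγ (f 0) hf0)
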